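/- Let a > 0 be a real constant and let r : ℝ → ℝ be twice differentiable with r(s) > 0, r′(s) ≠ 0, and r′(s)² = 1 − (a/r(s))^{4/3} for all s ∈ ℝ. Then 2 − 2r′(s)² − 3r(s)r″(s) = 0 for all s; consequently, if moreover 1 − r′(s)² − r(s)r″(s) ≠ 0, the mean curvature expression H = −(2 − 2r′(s)² − 3r(s)r″(s)) / ( 3r(s)(1 − r′(s)² − r(s)r″(s)) ) vanishes for all s. -/

import Mathlib

/-- If the radius function satisfies `r'² = 1 - (a/r)^{4/3}` with `r' ≠ 0`, then
`2 - 2r'² - 3rr″ = 0`, hence the mean curvature of the canal hypersurface `C₁` over a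
pseudo null straight line vanishes (the hypersurface is minimal). -/
theorem pseudoNull_canal_minimal_radius
    (a : ℝ) (ha : 0 < a) (r : ℝ → ℝ)
    (hr1 : Differentiable ℝ r) (hr2 : Differentiable ℝ (deriv r))
    (hrpos : ∀ s, 0 < r s) (hr' : ∀ s, deriv r s ≠ 0)
    (hode : ∀ s, (deriv r s) ^ 2 = 1 - (a / r s) ^ ((4 : ℝ) / 3)) :
    ∀ s, 2 - 2 * (deriv r s) ^ 2 - 3 * r s * deriv (deriv r) s = 0 ∧
      (1 - (deriv r s) ^ 2 - r s * deriv (deriv r) s ≠ 0 →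
        -(2 - 2 * (deriv r s) ^ 2 - 3 * r s * deriv (deriv r) s) /
          (3 * r s * (1 - (deriv r s) ^ 2 - r s * deriv (deriv r) s)) = 0) := by
  have main : ∀ s, 2 - 2 * (deriv r s) ^ 2 - 3 * r s * deriv (deriv r) s = 0 := by
    intro s
    have hrs := hrpos s
    have hq : 0 < a / r s := div_pos ha hrs
    have h1 : HasDerivAt (fun t => a / r t) (-(a * deriv r s) / (r s) ^ 2) s := by
      have := (hasDerivAt_const s a).div ((hr1 s).hasDerivAt) hrs.ne'
      simpa [Pi.div_def] using this
    have h2 : HasDerivAt (fun t => 1 - (a / r t) ^ ((4 : ℝ) / 3))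
        (-((-(a * deriv r s) / (r s) ^ 2) * ((4 : ℝ) / 3) *
          (a / r s) ^ ((4 : ℝ) / 3 - 1))) s :=
      (h1.rpow_const (Or.inr (by norm_num))).const_sub 1
    have h3 : HasDerivAt (fun t => (deriv r t) ^ 2)
        (2 * deriv r s * deriv (deriv r) s) s := by
      have := ((hr2 s).hasDerivAt).pow 2
      norm_num at this
      simpa [mul_comm, Pi.pow_def] using this
    have heq : HasDerivAt (fun t => (deriv r t) ^ 2)
        (-((-(a * deriv r s) / (r s) ^ 2) * ((4 : ℝ) / 3) *
          (a / r s) ^ ((4 : ℝ) / 3 - 1))) s := by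
      have hfun : (fun t => (deriv r t) ^ 2)
          = fun t => 1 - (a / r t) ^ ((4 : ℝ) / 3) := funext hode
      rw [hfun]; exact h2
    have key := h3.unique heq
    have hexp : ((4 : ℝ) / 3 - 1) = (1 : ℝ) / 3 := by norm_num
    rw [hexp] at key
    have hpow : (a / r s) ^ ((4 : ℝ) / 3)
        = (a / r s) ^ ((1 : ℝ) / 3) * (a / r s) := by
      rw [show (4 : ℝ) / 3 = 1 / 3 + 1 by norm_num, Real.rpow_add hq, Real.rpow_one]
    -- cancel deriv r s in key
    have hB : deriv (deriv r) s
        = 2 * a * (a / r s) ^ ((1 : ℝ) / 3) / (3 * (r s) ^ 2) := by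
      have h := mul_left_cancel₀ (hr' s)
        (show deriv r s * (2 * deriv (deriv r) s)
            = deriv r s * (2 * (2 * a * (a / r s) ^ ((1 : ℝ) / 3) / (3 * (r s) ^ 2))) by
          field_simp at key ⊢
          ring_nf at key ⊢
          linarith)
      linarith
    have hode' : (deriv r s) ^ 2 = 1 - (a / r s) ^ ((1 : ℝ) / 3) * (a / r s) := by
      rw [hode s, hpow]
    rw [hB, hode']
    field_simp
    ring
  intro s
  refine ⟨main s, fun _ => by rw [main s]; simp⟩
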